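/- Under the assumptions of the previous decomposition, if every generalized eigenvalue of S ξ = λ A_ΓΓ ξ in the orthogonal complement of span(Q) is at least η with 0 < η ≤ 1 (i.e., v^T S v ≥ η v^T A_ΓΓ v for all v with Q^T A_ΓΓ v = 0), and v^T S v < η v^T A_ΓΓ v on span(Q), then the coarse bilinear form a_0(u,u) = u^T (A_ΓΓ - A_ΓΓ Q D (Q^T A_ΓΓ Q)^{-1} Q^T A_ΓΓ) u satisfies a_0(u,u) ≤ (1/η) u^T S u for all u. -/

import Mathlib

open Matrix

private lemma dot_tr {p k : Type*} [Fintype p] [Fintype k]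
    (A : Matrix p k ℝ) (x : k → ℝ) (y : p → ℝ) :
    (A *ᵥ x) ⬝ᵥ y = x ⬝ᵥ (Aᵀ *ᵥ y) := by
  rw [dotProduct_comm, dotProduct_mulVec, ← mulVec_transpose, dotProduct_comm]

/-- Lemma 3.6 of the paper: under the spectral gap condition the
coarse bilinear form is bounded by `(1/η)` times the Schur complement energy. -/
theorem coarse_form_bounded_by_schur
    {p k : Type*} [Fintype p] [Fintype k] [DecidableEq p] [DecidableEq k]
    (AΓΓ : Matrix p p ℝ) (S : Matrix p p ℝ)
    (hAΓΓ : AΓΓ.PosDef) (hS : S.PosSemidef)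
    (Q : Matrix p k ℝ) (l : k → ℝ)
    (heig : S * Q = AΓΓ * Q * Matrix.diagonal l)
    (hQrank : LinearIndependent ℝ (fun j => (Qᵀ j : p → ℝ)))
    (hQinv : IsUnit (Qᵀ * AΓΓ * Q).det)
    (η : ℝ) (hη0 : 0 < η) (hη1 : η ≤ 1)
    (hgap : ∀ v : p → ℝ, Qᵀ *ᵥ (AΓΓ *ᵥ v) = 0 →
      η * (v ⬝ᵥ (AΓΓ *ᵥ v)) ≤ v ⬝ᵥ (S *ᵥ v))
    (hsmall : ∀ c : k → ℝ, c ≠ 0 →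
      (Q *ᵥ c) ⬝ᵥ (S *ᵥ (Q *ᵥ c)) < η * ((Q *ᵥ c) ⬝ᵥ (AΓΓ *ᵥ (Q *ᵥ c)))) :
    ∀ u : p → ℝ,
      u ⬝ᵥ ((AΓΓ - AΓΓ * Q * Matrix.diagonal (fun j => 1 - l j) * (Qᵀ * AΓΓ * Q)⁻¹ * Qᵀ * AΓΓ) *ᵥ u) ≤
        (1 / η) * (u ⬝ᵥ (S *ᵥ u)) := by
  intro u
  have hAsymm : AΓΓᵀ = AΓΓ := hAΓΓ.1.eq
  have hSsymm : Sᵀ = S := hS.1.eq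
  set M : Matrix k k ℝ := Qᵀ * AΓΓ * Q with hM
  have hMM : M * M⁻¹ = 1 := mul_nonsing_inv M hQinv
  have hMsymm : Mᵀ = M := by
    rw [hM]; simp [Matrix.transpose_mul, hAsymm, Matrix.mul_assoc]
  set t : k → ℝ := Qᵀ *ᵥ (AΓΓ *ᵥ u) with ht
  set c : k → ℝ := M⁻¹ *ᵥ t with hc
  set w : p → ℝ := u - Q *ᵥ c with hw
  have hu : u = Q *ᵥ c + w := by rw [hw]; ring_nf
  have hMc : M *ᵥ c = t := by
    rw [hc, mulVec_mulVec, hMM, one_mulVec]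
  -- orthogonality
  have hO : Qᵀ *ᵥ (AΓΓ *ᵥ w) = 0 := by
    have h1 : Qᵀ *ᵥ (AΓΓ *ᵥ (Q *ᵥ c)) = M *ᵥ c := by
      rw [hM, mulVec_mulVec, mulVec_mulVec]
    rw [hw, mulVec_sub, mulVec_sub, h1, hMc, ← ht, sub_self]
  -- Qᵀ S w = 0
  have hQtS : Qᵀ * S = Matrix.diagonal l * Qᵀ * AΓΓ := by
    have := congrArg Matrix.transpose heig
    simpa [Matrix.transpose_mul, hAsymm, hSsymm, Matrix.diagonal_transpose,
      Matrix.mul_assoc] using this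
  have hSw : Qᵀ *ᵥ (S *ᵥ w) = 0 := by
    rw [mulVec_mulVec, hQtS, ← mulVec_mulVec, ← mulVec_mulVec, hO, mulVec_zero]
  -- M * Λ = Qᵀ S Q
  have hMΛ : M * Matrix.diagonal l = Qᵀ * S * Q := by
    rw [hM, Matrix.mul_assoc, Matrix.mul_assoc, ← Matrix.mul_assoc AΓΓ, ← heig,
      Matrix.mul_assoc]
  -- coarse term computation
  have key2 : u ⬝ᵥ ((AΓΓ * Q * Matrix.diagonal (fun j => 1 - l j) * M⁻¹ * Qᵀ * AΓΓ) *ᵥ u)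
      = c ⬝ᵥ (M *ᵥ c) - (Q *ᵥ c) ⬝ᵥ (S *ᵥ (Q *ᵥ c)) := by
    have hDc : (AΓΓ * Q * Matrix.diagonal (fun j => 1 - l j) * M⁻¹ * Qᵀ * AΓΓ) *ᵥ u
        = AΓΓ *ᵥ (Q *ᵥ (Matrix.diagonal (fun j => 1 - l j) *ᵥ c)) := by
      rw [← mulVec_mulVec, ← mulVec_mulVec, ← ht]
      rw [← mulVec_mulVec, ← mulVec_mulVec, ← mulVec_mulVec, ← hc]
    rw [hDc]
    rw [dotProduct_comm, dot_tr, hAsymm, dot_tr, ← ht, ← hMc]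
    have hD : Matrix.diagonal (fun j => 1 - l j) = 1 - Matrix.diagonal l := by
      ext i j
      by_cases h : i = j <;> simp [Matrix.diagonal, Matrix.one_apply, h]
    rw [hD, sub_mulVec, one_mulVec, sub_dotProduct]
    congr 1
    -- (Λ c) ⬝ (M c) = (Qc) ⬝ S (Qc)
    have hcomm : Matrix.diagonal l * M = M * Matrix.diagonal l := by
      have h1 : (M * Matrix.diagonal l)ᵀ = M * Matrix.diagonal l := by
        rw [hMΛ]; simp [Matrix.transpose_mul, hSsymm, Matrix.mul_assoc]
      calc Matrix.diagonal l * M = (M * Matrix.diagonal l)ᵀ := by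
            simp [Matrix.transpose_mul, hMsymm, Matrix.diagonal_transpose]
        _ = M * Matrix.diagonal l := h1
    rw [dot_tr, Matrix.diagonal_transpose, mulVec_mulVec, hcomm, hMΛ,
      ← mulVec_mulVec, ← mulVec_mulVec, ← dot_tr]
  -- u ⬝ A u
  have keyA : u ⬝ᵥ (AΓΓ *ᵥ u) = c ⬝ᵥ (M *ᵥ c) + w ⬝ᵥ (AΓΓ *ᵥ w) := by
    rw [hu]
    rw [mulVec_add, dotProduct_add, add_dotProduct, add_dotProduct]
    have h1 : (Q *ᵥ c) ⬝ᵥ (AΓΓ *ᵥ (Q *ᵥ c)) = c ⬝ᵥ (M *ᵥ c) := by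
      rw [dot_tr, hM, ← mulVec_mulVec, ← mulVec_mulVec]
    have h2 : (Q *ᵥ c) ⬝ᵥ (AΓΓ *ᵥ w) = 0 := by
      rw [dot_tr, hO, dotProduct_zero]
    have h3 : w ⬝ᵥ (AΓΓ *ᵥ (Q *ᵥ c)) = 0 := by
      rw [dotProduct_comm, dot_tr, hAsymm, dot_tr, hO, dotProduct_zero]
    rw [h1, h2, h3]; ring
  -- u ⬝ S u
  have keyS : u ⬝ᵥ (S *ᵥ u) = (Q *ᵥ c) ⬝ᵥ (S *ᵥ (Q *ᵥ c)) + w ⬝ᵥ (S *ᵥ w) := by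
    rw [hu]
    rw [mulVec_add, dotProduct_add, add_dotProduct, add_dotProduct]
    have h2 : (Q *ᵥ c) ⬝ᵥ (S *ᵥ w) = 0 := by
      rw [dot_tr, hSw, dotProduct_zero]
    have h3 : w ⬝ᵥ (S *ᵥ (Q *ᵥ c)) = 0 := by
      rw [dotProduct_comm, dot_tr, hSsymm, dot_tr, hSw, dotProduct_zero]
    rw [h2, h3]; ring
  -- put together
  have hLHS : u ⬝ᵥ ((AΓΓ - AΓΓ * Q * Matrix.diagonal (fun j => 1 - l j) * M⁻¹ * Qᵀ * AΓΓ) *ᵥ u)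
      = w ⬝ᵥ (AΓΓ *ᵥ w) + (Q *ᵥ c) ⬝ᵥ (S *ᵥ (Q *ᵥ c)) := by
    rw [sub_mulVec, dotProduct_sub, key2, keyA]; ring
  rw [hLHS, keyS]
  have hg := hgap w hO
  have hX : 0 ≤ (Q *ᵥ c) ⬝ᵥ (S *ᵥ (Q *ᵥ c)) := by
    have := hS.dotProduct_mulVec_nonneg (Q *ᵥ c); simpa using this
  have hwA : 0 ≤ w ⬝ᵥ (AΓΓ *ᵥ w) := by
    rcases eq_or_ne w 0 with h | h
    · simp [h]
    · exact le_of_lt (by simpa using hAΓΓ.dotProduct_mulVec_pos h)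
  rw [div_mul_eq_mul_div, one_mul, le_div_iff₀ hη0]
  nlinarith [hg, hX, hwA]
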